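/- Let S be a feasible schedule, let C ⊆ T satisfy vol_S(C) = fv(C), let D ⊆ T with C ∩ D ≠ ∅, and let c, δ be integers with c ≥ δ ≥ 1. If vol_S(C ∩ D) > (c−1)·|C ∩ D| and fv(C ∩ D) ≤ (c−δ)·|C ∩ D|, then there exist at least δ distinct jobs j with uv_S(j, C ∩ D) > 0; moreover, every job j with uv_S(j, C ∩ D) > 0 satisfies E_j ∩ (C \ D) ≠ ∅ and is scheduled (on some processor) at every slot of E_j \ C. -/
import Mathlib


open Finset

/-- Execution interval of job `j`: the slots between its release time and deadline. -/
def Ei {J : Type} (r dl : J → ℕ) (j : J) : Finset ℕ := Finset.Icc (r j) (dl j)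

/-- The time horizon `T = {0, …, d}`, where `d` is the maximal deadline. -/
def Tslots {J : Type} [Fintype J] (dl : J → ℕ) : Finset ℕ :=
  Finset.Icc 0 (Finset.univ.sup dl)

/-- A schedule assigns to each processor and slot at most one job; it is feasible if
every job `j` is assigned to exactly `p j` processor/slot pairs, all of whose slots lie
in `E j`, and no job is assigned to two different processors at the same slot. -/
def Feasible {J : Type} [Fintype J] [DecidableEq J] (r dl p : J → ℕ) (m : ℕ)
    (S : Fin m → ℕ → Option J) : Prop :=
  (∀ (k : Fin m) (t : ℕ) (j : J), S k t = some j → t ∈ Ei r dl j) ∧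
  (∀ j : J, ((Finset.univ ×ˢ Tslots dl).filter
      (fun kt : Fin m × ℕ => S kt.1 kt.2 = some j)).card = p j) ∧
  (∀ (t : ℕ) (j : J) (k k' : Fin m), S k t = some j → S k' t = some j → k = k')

/-- Number of processors busy at slot `t` in schedule `S`. -/
def volT {J : Type} [DecidableEq J] {m : ℕ} (S : Fin m → ℕ → Option J) (t : ℕ) : ℕ :=
  (Finset.univ.filter (fun k : Fin m => (S k t).isSome)).card

/-- Number of slots of `Q` at which job `j` is scheduled in `S`. -/
def volJ {J : Type} [DecidableEq J] {m : ℕ} (S : Fin m → ℕ → Option J) (j : J)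
    (Q : Finset ℕ) : ℕ :=
  (Q.filter (fun t => ∃ k, S k t = some j)).card

/-- Total volume scheduled in `Q` by `S`. -/
def volQ {J : Type} [Fintype J] [DecidableEq J] {m : ℕ} (S : Fin m → ℕ → Option J)
    (Q : Finset ℕ) : ℕ :=
  ∑ j, volJ S j Q

/-- Forced volume of job `j` in `Q`: `max {0, p j − |E j \ Q|}`. -/
def fvJ {J : Type} (r dl p : J → ℕ) (j : J) (Q : Finset ℕ) : ℕ :=
  p j - (Ei r dl j \ Q).card

/-- Total forced volume in `Q`. -/
def fvQ {J : Type} [Fintype J] (r dl p : J → ℕ) (Q : Finset ℕ) : ℕ :=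
  ∑ j, fvJ r dl p j Q

/-- Possible volume of job `j` in `Q`: `min {p j, |E j ∩ Q|}`. -/
def pvJ {J : Type} (r dl p : J → ℕ) (j : J) (Q : Finset ℕ) : ℕ :=
  min (p j) ((Ei r dl j) ∩ Q).card

/-- Total possible volume in `Q`. -/
def pvQ {J : Type} [Fintype J] (r dl p : J → ℕ) (Q : Finset ℕ) : ℕ :=
  ∑ j, pvJ r dl p j Q

/-- The unnecessary volume of job `j` in `Q` under `S`: `vol − fv` (as an integer). -/
def uvJ {J : Type} [DecidableEq J] {m : ℕ} (S : Fin m → ℕ → Option J)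
    (r dl p : J → ℕ) (j : J) (Q : Finset ℕ) : ℤ :=
  (volJ S j Q : ℤ) - (fvJ r dl p j Q : ℤ)


set_option linter.unusedSectionVars false
section Aux
variable {J : Type} [Fintype J] [DecidableEq J] {r dl p : J → ℕ} {m : ℕ}
  {S : Fin m → ℕ → Option J}

lemma Ei_subset_Tslots (r dl : J → ℕ) (j : J) : Ei r dl j ⊆ Tslots dl := by
  intro t ht
  simp only [Ei, mem_Icc] at ht
  simp only [Tslots, mem_Icc]
  exact ⟨Nat.zero_le _, ht.2.trans (Finset.le_sup (mem_univ j))⟩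

lemma volJ_Ei (hS : Feasible r dl p m S) (j : J) :
    volJ S j (Ei r dl j) = p j := by
  obtain ⟨h1, h2, h3⟩ := hS
  rw [volJ, ← h2 j]
  have himg : ((Finset.univ ×ˢ Tslots dl).filter
      (fun kt : Fin m × ℕ => S kt.1 kt.2 = some j)).image Prod.snd
      = (Ei r dl j).filter (fun t => ∃ k, S k t = some j) := by
    ext t
    simp only [mem_image, mem_filter, mem_product, mem_univ, true_and, Prod.exists]
    constructor
    · rintro ⟨k, t', ⟨ht', hkt⟩, rfl⟩
      exact ⟨h1 _ _ _ hkt, k, hkt⟩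
    · rintro ⟨hEi, k, hk⟩
      exact ⟨k, t, ⟨Ei_subset_Tslots r dl j hEi, hk⟩, rfl⟩
  rw [← himg, Finset.card_image_of_injOn]
  rintro ⟨k, t⟩ h ⟨k', t'⟩ h' (heq : t = t')
  simp only [mem_coe, mem_filter] at h h'
  subst heq
  have := h3 t j k k' h.2 h'.2
  simp [Prod.ext_iff, this]

lemma volJ_inter (hS : Feasible r dl p m S) (j : J) (Q : Finset ℕ) :
    volJ S j (Ei r dl j ∩ Q) = volJ S j Q := by
  unfold volJ
  congr 1
  ext t
  simp only [mem_filter, mem_inter]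
  constructor
  · tauto
  · rintro ⟨hQ, k, hk⟩; exact ⟨⟨hS.1 k t j hk, hQ⟩, k, hk⟩

lemma volJ_split (hS : Feasible r dl p m S) (j : J) (Q : Finset ℕ) :
    volJ S j Q + volJ S j (Ei r dl j \ Q) = p j := by
  rw [← volJ_inter hS j Q, ← volJ_Ei hS j]
  unfold volJ
  have hdisj : Disjoint ((Ei r dl j ∩ Q).filter (fun t => ∃ k, S k t = some j))
      ((Ei r dl j \ Q).filter (fun t => ∃ k, S k t = some j)) :=
    (Finset.disjoint_sdiff.mono_left Finset.inter_subset_right).mono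
      (Finset.filter_subset _ _) (Finset.filter_subset _ _)
  rw [← Finset.card_union_of_disjoint hdisj, ← Finset.filter_union]
  congr 1
  ext t
  simp only [Finset.mem_filter, Finset.mem_union, Finset.mem_inter, Finset.mem_sdiff]
  tauto

lemma volJ_mono {Q Q' : Finset ℕ} (h : Q ⊆ Q') (j : J) :
    volJ S j Q ≤ volJ S j Q' :=
  Finset.card_le_card (Finset.monotone_filter_left _ h)

lemma volJ_le_card (j : J) (Q : Finset ℕ) : volJ S j Q ≤ Q.card :=
  Finset.card_filter_le _ _

lemma fvJ_le_volJ (hS : Feasible r dl p m S) (j : J) (Q : Finset ℕ) :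
    fvJ r dl p j Q ≤ volJ S j Q := by
  have hsplit := volJ_split hS j Q
  have h1 : volJ S j (Ei r dl j \ Q) ≤ (Ei r dl j \ Q).card :=
    Finset.card_filter_le _ _
  unfold fvJ
  omega

lemma tight_pointwise (hS : Feasible r dl p m S) (C : Finset ℕ)
    (ht : volQ S C = fvQ r dl p C) (j : J) :
    volJ S j C = fvJ r dl p j C := by
  by_contra hne
  have hlt : fvJ r dl p j C < volJ S j C :=
    lt_of_le_of_ne (fvJ_le_volJ hS j C) (Ne.symm hne)
  have hsum : fvQ r dl p C < volQ S C :=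
    Finset.sum_lt_sum (fun i _ => fvJ_le_volJ hS i C) ⟨j, Finset.mem_univ j, hlt⟩
  omega

end Aux

/-- If `S` is tight on `C` (`vol_S(C) = fv(C)`), `vol_S(C∩D) > (c−1)·|C∩D|` and
`fv(C∩D) ≤ (c−δ)·|C∩D|`, then at least `δ` distinct jobs have positive unnecessary
volume in `C∩D`; moreover every such job has an execution interval meeting `C \ D` and
is scheduled at every slot of `E j \ C`. -/
theorem valley_jobs (J : Type) [Fintype J] [DecidableEq J]
    (r dl p : J → ℕ) (hrd : ∀ j, r j ≤ dl j) (hp : ∀ j, p j ≤ dl j - r j + 1)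
    (m : ℕ) (hm : 1 ≤ m)
    (S : Fin m → ℕ → Option J) (hS : Feasible r dl p m S)
    (C D : Finset ℕ) (hC : C ⊆ Tslots dl) (hD : D ⊆ Tslots dl)
    (hCD : (C ∩ D).Nonempty)
    (c δ : ℕ) (hδ : 1 ≤ δ) (hcδ : δ ≤ c)
    (htight : volQ S C = fvQ r dl p C)
    (hvol : (c - 1) * (C ∩ D).card < volQ S (C ∩ D))
    (hfv : fvQ r dl p (C ∩ D) ≤ (c - δ) * (C ∩ D).card) :
    δ ≤ (Finset.univ.filter (fun j : J => 0 < uvJ S r dl p j (C ∩ D))).card ∧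
    (∀ j : J, 0 < uvJ S r dl p j (C ∩ D) →
      (Ei r dl j ∩ (C \ D)).Nonempty ∧
      (∀ t ∈ Ei r dl j \ C, ∃ k : Fin m, S k t = some j)) := by
  set Q := C ∩ D with hQdef
  have htC : ∀ j, volJ S j C = fvJ r dl p j C := tight_pointwise hS C htight
  have hQC : Q ⊆ C := Finset.inter_subset_left
  have hpart2 : ∀ j : J, 0 < uvJ S r dl p j Q →
      (Ei r dl j ∩ (C \ D)).Nonempty ∧
      (∀ t ∈ Ei r dl j \ C, ∃ k : Fin m, S k t = some j) := by
    intro j huv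
    simp only [uvJ, sub_pos] at huv
    have hlt : fvJ r dl p j Q < volJ S j Q := by exact_mod_cast huv
    constructor
    · by_contra hempty
      rw [Finset.not_nonempty_iff_eq_empty] at hempty
      have hsd : Ei r dl j \ C = Ei r dl j \ Q := by
        ext t
        simp only [Finset.mem_sdiff, hQdef, Finset.mem_inter]
        constructor
        · rintro ⟨hE, hnC⟩; exact ⟨hE, fun h => hnC h.1⟩
        · rintro ⟨hE, hnot⟩
          refine ⟨hE, fun hc => hnot ⟨hc, ?_⟩⟩
          by_contra hd
          have htmem : t ∈ Ei r dl j ∩ (C \ D) := by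
            simp only [Finset.mem_inter, Finset.mem_sdiff]
            exact ⟨hE, hc, hd⟩
          rw [hempty] at htmem
          exact absurd htmem (Finset.notMem_empty t)
      have h1 := volJ_split hS j C
      have h2 := volJ_split hS j Q
      rw [hsd] at h1
      have hf : fvJ r dl p j C = fvJ r dl p j Q := by unfold fvJ; rw [hsd]
      have h3 := htC j
      omega
    · intro t ht
      by_contra hnone
      push_neg at hnone
      have hssub : (Ei r dl j \ C).filter (fun t => ∃ k, S k t = some j)
          ⊂ Ei r dl j \ C := by
        refine (Finset.ssubset_iff_of_subset (Finset.filter_subset _ _)).mpr ⟨t, ht, ?_⟩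
        simp only [Finset.mem_filter, not_and]
        rintro - ⟨k, hk⟩
        exact hnone k hk
      have hw : volJ S j (Ei r dl j \ C) < (Ei r dl j \ C).card :=
        Finset.card_lt_card hssub
      have hsplit := volJ_split hS j C
      have hmono : volJ S j Q ≤ volJ S j C := volJ_mono hQC j
      have h3 := htC j
      unfold fvJ at h3
      omega
  refine ⟨?_, hpart2⟩
  have hnn : ∀ j : J, 0 ≤ uvJ S r dl p j Q := fun j => by
    simp only [uvJ, sub_nonneg]
    exact_mod_cast fvJ_le_volJ hS j Q
  set K := Finset.univ.filter (fun j : J => 0 < uvJ S r dl p j Q) with hK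
  have hsumK : ∑ j ∈ K, uvJ S r dl p j Q = ∑ j, uvJ S r dl p j Q :=
    Finset.sum_filter_of_ne (fun j _ hne => lt_of_le_of_ne (hnn j) (Ne.symm hne))
  have hsum_eq : ∑ j, uvJ S r dl p j Q = (volQ S Q : ℤ) - (fvQ r dl p Q : ℤ) := by
    unfold uvJ volQ fvQ
    push_cast
    rw [Finset.sum_sub_distrib]
  have hub : ∑ j ∈ K, uvJ S r dl p j Q ≤ (K.card : ℤ) * Q.card := by
    calc ∑ j ∈ K, uvJ S r dl p j Q ≤ ∑ _j ∈ K, (Q.card : ℤ) := by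
          apply Finset.sum_le_sum
          intro j _
          simp only [uvJ]
          have h1 : (volJ S j Q : ℤ) ≤ Q.card := by exact_mod_cast volJ_le_card j Q
          have h2 : (0:ℤ) ≤ fvJ r dl p j Q := by positivity
          omega
      _ = (K.card : ℤ) * Q.card := by rw [Finset.sum_const, nsmul_eq_mul]
  have hcard : 0 < Q.card := Finset.card_pos.mpr hCD
  have hc1 : 1 ≤ c := le_trans hδ hcδ
  have hA : ((c:ℤ) - 1) * Q.card < (volQ S Q : ℤ) := by
    have h := hvol
    zify [hc1] at h
    exact h
  have hB : (fvQ r dl p Q : ℤ) ≤ ((c:ℤ) - δ) * Q.card := by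
    have h := hfv
    zify [hcδ] at h
    exact h
  have hAB : (volQ S Q : ℤ) - (fvQ r dl p Q : ℤ) ≤ (K.card : ℤ) * Q.card := by
    rw [← hsum_eq, ← hsumK]; exact hub
  have key : ((δ:ℤ) - 1) * Q.card < (K.card : ℤ) * Q.card := by nlinarith
  have hfin : ((δ:ℤ) - 1) < (K.card : ℤ) :=
    lt_of_mul_lt_mul_right key (by positivity)
  omega
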